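/- Let f : ℝⁿ → ℝⁿ be continuously differentiable with f'(x) invertible for every x, and suppose there is a constant A < ∞ with ‖f'(x)⁻¹‖ ≤ A for all x ∈ ℝⁿ. Then f is injective. -/

import Mathlib

open Metric Set

set_option maxHeartbeats 1000000

theorem hadamard_aux {E : Type*} [NormedAddCommGroup E] [NormedSpace ℝ E]
    [CompleteSpace E] [ProperSpace E]
    (f : E → E) (hf : ContDiff ℝ 1 f) (A : ℝ)
    (hinv : ∀ x : E, ∃ g : E ≃L[ℝ] E,
      (g : E →L[ℝ] E) = fderiv ℝ f x ∧ ‖(g.symm : E →L[ℝ] E)‖ ≤ A) :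
    Function.Injective f := by
  rcases subsingleton_or_nontrivial E with hE | hE
  · exact fun a b _ => Subsingleton.elim a b
  -- positivity of symm norms
  have hsympos : ∀ g : E ≃L[ℝ] E, 0 < ‖(g.symm : E →L[ℝ] E)‖ := by
    intro g
    rcases exists_ne (0 : E) with ⟨v, hv⟩
    refine norm_pos_iff.mpr fun h0 => hv ?_
    have h1 : (g.symm : E →L[ℝ] E) (g v) = v := g.symm_apply_apply v
    rw [h0] at h1
    simpa using h1.symm
  have hA : 0 < A := by
    obtain ⟨g, -, hgA⟩ := hinv 0
    exact lt_of_lt_of_le (hsympos g) hgA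
  have hder : ∀ x, HasFDerivAt f (fderiv ℝ f x) x := fun x =>
    (hf.differentiable one_ne_zero x).hasFDerivAt
  have hlow : ∀ x (w : E), ‖w‖ ≤ A * ‖fderiv ℝ f x w‖ := by
    intro x w
    obtain ⟨g, hg, hgA⟩ := hinv x
    have hw : (g.symm : E →L[ℝ] E) (fderiv ℝ f x w) = w := by
      rw [← hg]; exact g.symm_apply_apply w
    calc ‖w‖ = ‖(g.symm : E →L[ℝ] E) (fderiv ℝ f x w)‖ := by rw [hw]
      _ ≤ ‖(g.symm : E →L[ℝ] E)‖ * ‖fderiv ℝ f x w‖ := ContinuousLinearMap.le_opNorm _ _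
      _ ≤ A * ‖fderiv ℝ f x w‖ := mul_le_mul_of_nonneg_right hgA (norm_nonneg _)
  intro a b hab
  -- the path and its Lipschitz bound
  set σ : ℝ → E := fun t => a + t • (b - a) with hσdef
  have hσc : ContDiff ℝ 1 σ := contDiff_const.add (contDiff_id.smul contDiff_const)
  set φ : ℝ → E := fun t => f (σ t) with hφdef
  have hφc : ContDiff ℝ 1 φ := hf.comp hσc
  obtain ⟨L0, hL0⟩ := (isCompact_Icc (a := (0:ℝ)) (b := 1)).exists_bound_of_continuousOn
    ((hφc.continuous_fderiv one_ne_zero).continuousOn)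
  set L : ℝ := max L0 0 with hLdef
  have hL : 0 ≤ L := le_max_right _ _
  have hφlip : ∀ t ∈ Icc (0:ℝ) 1, ∀ t' ∈ Icc (0:ℝ) 1, ‖φ t - φ t'‖ ≤ L * |t - t'| := by
    intro t ht t' ht'
    have h1 := (convex_Icc (0:ℝ) 1).norm_image_sub_le_of_norm_hasFDerivWithin_le
      (f := φ) (f' := fun u => fderiv ℝ φ u) (C := L)
      (fun u hu => ((hφc.differentiable one_ne_zero u).hasFDerivAt).hasFDerivWithinAt)
      (fun u hu => le_trans (hL0 u hu) (le_max_left _ _)) ht' ht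
    simpa [Real.norm_eq_abs] using h1
  set c : E := f a with hcdef
  have hσ0 : σ 0 = a := by simp [hσdef]
  have hσ1 : σ 1 = b := by simp [hσdef]
  have hφ0 : φ 0 = c := by simp [hφdef, hσ0, hcdef]
  have hφ1 : φ 1 = c := by simp [hφdef, hσ1, hcdef, ← hab]
  have hφD : ∀ t ∈ Icc (0:ℝ) 1, ‖φ t - c‖ ≤ L := by
    intro t ht
    have h1 := hφlip t ht 0 ⟨le_refl 0, zero_le_one⟩
    rw [hφ0] at h1
    have h2 : |t - 0| ≤ 1 := by rw [sub_zero, abs_of_nonneg ht.1]; exact ht.2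
    nlinarith [h1, hL]
  set R : ℝ := ‖b - a‖ + 2 * A * L + 1 with hRdef
  have hRpos : 0 < R := by positivity
  -- uniform continuity of the derivative on the big ball
  have hucont := ((isCompact_closedBall a (R + 1)).uniformContinuousOn_of_continuous
    ((hf.continuous_fderiv one_ne_zero).continuousOn))
  rw [Metric.uniformContinuousOn_iff_le] at hucont
  obtain ⟨r0, hr0pos, hr0⟩ := hucont (1 / (2 * A)) (by positivity)
  set r : ℝ := min r0 1 with hrdef
  have hrpos : 0 < r := lt_min hr0pos one_pos
  have hr1 : r ≤ 1 := min_le_right _ _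
  have hrr0 : r ≤ r0 := min_le_left _ _
  set δ : ℝ := r / (2 * A) with hδdef
  have hδpos : 0 < δ := by positivity
  have h2Aδ : 2 * A * δ = r := by rw [hδdef]; field_simp
  have hsub : ∀ x ∈ closedBall a R, closedBall x r ⊆ closedBall a (R + 1) := by
    intro x hx u hu
    rw [mem_closedBall] at *
    have h1 := dist_triangle u x a
    linarith [hu.trans hr1]
  have happrox : ∀ x ∈ closedBall a R, ∀ u ∈ closedBall x r, ∀ v ∈ closedBall x r,
      ‖f u - f v - fderiv ℝ f x (u - v)‖ ≤ 1 / (2 * A) * ‖u - v‖ := by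
    intro x hx u hu v hv
    have key := (convex_closedBall x r).norm_image_sub_le_of_norm_hasFDerivWithin_le
      (f := fun w => f w - fderiv ℝ f x w)
      (f' := fun w => fderiv ℝ f w - fderiv ℝ f x)
      (C := 1 / (2 * A))
      (fun w hw => ((hder w).sub ((fderiv ℝ f x).hasFDerivAt)).hasFDerivWithinAt)
      (fun w hw => by
        have h1 : w ∈ closedBall a (R + 1) := hsub x hx hw
        have h2 : x ∈ closedBall a (R + 1) := hsub x hx (mem_closedBall_self hrpos.le)
        have h3 : dist w x ≤ r0 := le_trans (mem_closedBall.mp hw) hrr0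
        have h4 := hr0 w h1 x h2 h3
        rwa [dist_eq_norm] at h4)
      hv hu
    have heq : (fun w => f w - fderiv ℝ f x w) u - (fun w => f w - fderiv ℝ f x w) v
        = f u - f v - fderiv ℝ f x (u - v) := by
      simp only [map_sub]; abel
    rw [heq] at key
    exact key
  have hanti : ∀ x ∈ closedBall a R, ∀ u ∈ closedBall x r, ∀ v ∈ closedBall x r,
      ‖u - v‖ ≤ 2 * A * ‖f u - f v‖ := by
    intro x hx u hu v hv
    have h1 := hlow x (u - v)
    have h2 := happrox x hx u hu v hv
    have h3 : ‖fderiv ℝ f x (u - v)‖ ≤ ‖f u - f v‖ + 1 / (2 * A) * ‖u - v‖ := by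
      have heq : fderiv ℝ f x (u - v) = (f u - f v) - (f u - f v - fderiv ℝ f x (u - v)) := by
        abel
      rw [heq]
      exact (norm_sub_le _ _).trans (by linarith)
    have h4 : A * (1 / (2 * A)) = 1 / 2 := by field_simp
    have h5 := h1.trans (mul_le_mul_of_nonneg_left h3 hA.le)
    rw [mul_add, ← mul_assoc, h4] at h5
    linarith
  have hsurj : ∀ x ∈ closedBall a R, ∀ y : E, dist y (f x) ≤ δ →
      ∃ u, dist u x ≤ r ∧ f u = y := by
    intro x hx y hy
    obtain ⟨g, hg, hgA⟩ := hinv x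
    set cnn : NNReal := Real.toNNReal (1 / (2 * A)) with hcnndef
    have hcnn : (cnn : ℝ) = 1 / (2 * A) := Real.coe_toNNReal _ (by positivity)
    have hap : ApproximatesLinearOn f (g : E →L[ℝ] E) (closedBall x r) cnn := by
      intro u hu v hv
      rw [hg, hcnn]
      exact happrox x hx u hu v hv
    have hsOn := hap.surjOn_closedBall_of_nonlinearRightInverse g.toNonlinearRightInverse
      hrpos.le (subset_refl _)
    have hgpos := hsympos g
    have hineq : δ ≤ (((g.toNonlinearRightInverse.nnnorm : ℝ))⁻¹ - cnn) * r := by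
      have hnn : (g.toNonlinearRightInverse.nnnorm : ℝ) = ‖(g.symm : E →L[ℝ] E)‖ := rfl
      rw [hnn]
      have h1 : A⁻¹ ≤ ‖(g.symm : E →L[ℝ] E)‖⁻¹ := inv_anti₀ hgpos hgA
      have hAinv : 1 / (2 * A) + 1 / (2 * A) = A⁻¹ := by
        rw [← add_div, inv_eq_one_div, div_eq_div_iff (by positivity) hA.ne']
        ring
      have h2 : 1 / (2 * A) ≤ ‖(g.symm : E →L[ℝ] E)‖⁻¹ - (cnn : ℝ) := by
        rw [hcnn]; linarith
      calc δ = (1 / (2 * A)) * r := by rw [hδdef]; ring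
        _ ≤ (‖(g.symm : E →L[ℝ] E)‖⁻¹ - (cnn : ℝ)) * r := mul_le_mul_of_nonneg_right h2 hrpos.le
    have hy' : y ∈ closedBall (f x) ((((g.toNonlinearRightInverse.nnnorm : ℝ))⁻¹ - cnn) * r) :=
      mem_closedBall.mpr (hy.trans hineq)
    obtain ⟨u, hu1, hu2⟩ := hsOn hy'
    exact ⟨u, mem_closedBall.mp hu1, hu2⟩
  have hex : ∀ x y, ∃ u : E, x ∈ closedBall a R → dist y (f x) ≤ δ →
      dist u x ≤ r ∧ f u = y := by
    intro x y
    by_cases h : x ∈ closedBall a R ∧ dist y (f x) ≤ δ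
    · obtain ⟨u, h1, h2⟩ := hsurj x h.1 y h.2
      exact ⟨u, fun _ _ => ⟨h1, h2⟩⟩
    · exact ⟨a, fun h1 h2 => absurd ⟨h1, h2⟩ h⟩
  choose gi hgi using hex
  have hφσ : ∀ t, f (σ t) = φ t := fun t => rfl
  clear_value σ φ L c R r δ
  set H : ℝ → ℝ → E := fun s t => c + (1 - s) • (φ t - c) with hHdef
  have hHs0 : ∀ t, H 0 t = φ t := by intro t; simp [hHdef]
  have hHs1 : ∀ t, H 1 t = c := by intro t; simp [hHdef]
  have hHt0 : ∀ s, H s 0 = c := by intro s; simp [hHdef, hφ0]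
  have hHt1 : ∀ s, H s 1 = c := by intro s; simp [hHdef, hφ1]
  have hHtlip : ∀ s ∈ Icc (0:ℝ) 1, ∀ t ∈ Icc (0:ℝ) 1, ∀ t' ∈ Icc (0:ℝ) 1,
      ‖H s t - H s t'‖ ≤ L * |t - t'| := by
    intro s hs t ht t' ht'
    have heq : H s t - H s t' = (1 - s) • (φ t - φ t') := by
      simp only [hHdef]; module
    rw [heq, norm_smul]
    have h1 : ‖(1 : ℝ) - s‖ ≤ 1 := by
      rw [Real.norm_eq_abs, abs_le]; constructor <;> [linarith [hs.2]; linarith [hs.1]]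
    calc ‖(1:ℝ) - s‖ * ‖φ t - φ t'‖ ≤ 1 * (L * |t - t'|) :=
          mul_le_mul h1 (hφlip t ht t' ht') (norm_nonneg _) one_pos.le
      _ = L * |t - t'| := one_mul _
  have hHslip : ∀ s ∈ Icc (0:ℝ) 1, ∀ s' ∈ Icc (0:ℝ) 1, ∀ t ∈ Icc (0:ℝ) 1,
      ‖H s t - H s' t‖ ≤ L * |s - s'| := by
    intro s hs s' hs' t ht
    have heq : H s t - H s' t = (s' - s) • (φ t - c) := by
      simp only [hHdef]; module
    rw [heq, norm_smul, Real.norm_eq_abs, abs_sub_comm]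
    calc |s - s'| * ‖φ t - c‖ ≤ |s - s'| * L :=
          mul_le_mul_of_nonneg_left (hφD t ht) (abs_nonneg _)
      _ = L * |s - s'| := mul_comm _ _
  clear_value H
  obtain ⟨N, hN⟩ := exists_nat_ge (max (max (2 * L / δ) (‖b - a‖ / r)) 1)
  have hN1 : (1:ℝ) ≤ N := le_trans (le_max_right _ _) hN
  have hNpos : (0:ℝ) < N := lt_of_lt_of_le one_pos hN1
  have hNL : L / N ≤ δ / 2 := by
    have h1 : 2 * L / δ ≤ N := le_trans (le_trans (le_max_left _ _) (le_max_left _ _)) hN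
    rw [div_le_iff₀ hδpos] at h1
    rw [div_le_div_iff₀ hNpos two_pos]
    linarith
  have hNLδ : L / N ≤ δ := le_trans hNL (by linarith)
  have hNb : ‖b - a‖ / N ≤ r := by
    have h1 : ‖b - a‖ / r ≤ N := le_trans (le_trans (le_max_right _ _) (le_max_left _ _)) hN
    rw [div_le_iff₀ hrpos] at h1
    rw [div_le_iff₀ hNpos]
    linarith
  have h2ALN : 2 * A * (L / N) ≤ r / 2 := by
    have h1 : 2 * A * (L / N) ≤ 2 * A * (δ / 2) :=
      mul_le_mul_of_nonneg_left hNL (by positivity)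
    nlinarith [h2Aδ]
  have hmemdiv : ∀ m : ℕ, m ≤ N → ((m : ℝ) / N) ∈ Icc (0:ℝ) 1 := by
    intro m hm
    constructor
    · positivity
    · rw [div_le_one hNpos]; exact_mod_cast hm
  have hHstep : ∀ s ∈ Icc (0:ℝ) 1, ∀ k : ℕ, k + 1 ≤ N →
      ‖H s (((k+1:ℕ):ℝ)/N) - H s ((k:ℝ)/N)‖ ≤ L / N := by
    intro s hs k hk
    have h1 := hHtlip s hs _ (hmemdiv (k+1) hk) _ (hmemdiv k (le_trans (Nat.le_succ k) hk))
    have h2 : ((k+1:ℕ):ℝ)/N - (k:ℝ)/N = 1/N := by push_cast; ring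
    rw [h2, abs_of_nonneg (by positivity)] at h1
    calc ‖H s (((k+1:ℕ):ℝ)/N) - H s ((k:ℝ)/N)‖ ≤ L * (1/N) := h1
      _ = L / N := by ring
  -- the grid
  let X : ℕ → ℕ → E := fun j k =>
    Nat.rec (motive := fun _ => E) a
      (fun k xk => gi xk (H ((j : ℝ) / N) (((k + 1 : ℕ) : ℝ) / N))) k
  have hX0 : ∀ j, X j 0 = a := fun j => rfl
  have hXsucc : ∀ j k, X j (k + 1) = gi (X j k) (H ((j : ℝ) / N) (((k + 1 : ℕ) : ℝ) / N)) :=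
    fun j k => rfl
  clear_value X
  have hKmem : ∀ {x : E}, ‖x - a‖ ≤ 2 * A * L → x ∈ closedBall a R := by
    intro x hx
    rw [mem_closedBall, dist_eq_norm, hRdef]
    have h1 : 0 ≤ ‖b - a‖ := norm_nonneg _
    linarith
  have hkbound : ∀ k : ℕ, k ≤ N → (k:ℝ) * (2 * A * (L / N)) ≤ 2 * A * L := by
    intro k hk
    have hkN : (k:ℝ) ≤ N := by exact_mod_cast hk
    have h1 : (k:ℝ) * (2 * A * (L / N)) ≤ (N:ℝ) * (2 * A * (L / N)) :=
      mul_le_mul_of_nonneg_right hkN (by positivity)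
    have h2 : (N:ℝ) * (2 * A * (L / N)) = 2 * A * L := by
      rw [mul_comm ((N:ℝ)) _, mul_assoc (2*A) (L/(N:ℝ)) (N:ℝ), div_mul_cancel₀ L hNpos.ne']
    linarith
  have main : ∀ j, j ≤ N → ∀ k, k ≤ N →
      f (X j k) = H ((j:ℝ)/N) ((k:ℝ)/N) ∧ ‖X j k - a‖ ≤ (k:ℝ) * (2 * A * (L / N)) := by
    intro j hj k
    induction k with
    | zero =>
      intro _
      have e0 : ((0:ℕ):ℝ)/(N:ℝ) = 0 := by norm_num
      refine ⟨?_, ?_⟩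
      · rw [hX0, e0, hHt0]; exact hcdef.symm
      · rw [hX0, sub_self, norm_zero, Nat.cast_zero, zero_mul]
    | succ k ih =>
      intro hk1
      have hk : k ≤ N := le_trans (Nat.le_succ k) hk1
      obtain ⟨ihf, ihd⟩ := ih hk
      have hsIcc : ((j:ℝ)/N) ∈ Icc (0:ℝ) 1 := hmemdiv j hj
      have hXK : X j k ∈ closedBall a R := hKmem (le_trans ihd (hkbound k hk))
      have hdH : dist (H ((j:ℝ)/N) (((k+1:ℕ):ℝ)/N)) (f (X j k)) ≤ δ := by
        rw [ihf, dist_eq_norm]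
        exact le_trans (hHstep _ hsIcc k hk1) hNLδ
      obtain ⟨hgd, hgf⟩ := hgi (X j k) (H ((j:ℝ)/N) (((k+1:ℕ):ℝ)/N)) hXK hdH
      have hffact : f (X j (k+1)) = H ((j:ℝ)/N) (((k+1:ℕ):ℝ)/N) := by
        rw [hXsucc]; exact hgf
      refine ⟨hffact, ?_⟩
      have hball : X j (k+1) ∈ closedBall (X j k) r := by
        rw [mem_closedBall, hXsucc]; exact hgd
      have hstep : ‖X j (k+1) - X j k‖ ≤ 2 * A * (L / N) := by
        have h1 := hanti (X j k) hXK (X j (k+1)) hball (X j k) (mem_closedBall_self hrpos.le)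
        calc ‖X j (k+1) - X j k‖ ≤ 2*A*‖f (X j (k+1)) - f (X j k)‖ := h1
          _ ≤ 2*A*(L/N) := by
              rw [hffact, ihf]
              exact mul_le_mul_of_nonneg_left (hHstep _ hsIcc k hk1) (by positivity)
      have htri : ‖X j (k+1) - a‖ ≤ ‖X j (k+1) - X j k‖ + ‖X j k - a‖ := by
        have := dist_triangle (X j (k+1)) (X j k) a
        simpa [dist_eq_norm] using this
      have hALN : 0 ≤ 2 * A * (L / N) := by positivity
      push_cast
      push_cast at ihd
      nlinarith [htri, hstep, ihd]
  have hXmem : ∀ j, j ≤ N → ∀ k, k ≤ N → X j k ∈ closedBall a R := fun j hj k hk =>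
    hKmem (le_trans (main j hj k hk).2 (hkbound k hk))
  have hXstep : ∀ j, j ≤ N → ∀ k, k + 1 ≤ N → ‖X j (k+1) - X j k‖ ≤ 2 * A * (L / N) := by
    intro j hj k hk1
    have hk : k ≤ N := le_trans (Nat.le_succ k) hk1
    have hsIcc : ((j:ℝ)/N) ∈ Icc (0:ℝ) 1 := hmemdiv j hj
    have ihf := (main j hj k hk).1
    have hXK := hXmem j hj k hk
    have hdH : dist (H ((j:ℝ)/N) (((k+1:ℕ):ℝ)/N)) (f (X j k)) ≤ δ := by
      rw [ihf, dist_eq_norm]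
      exact le_trans (hHstep _ hsIcc k hk1) hNLδ
    obtain ⟨hgd, hgf⟩ := hgi (X j k) (H ((j:ℝ)/N) (((k+1:ℕ):ℝ)/N)) hXK hdH
    have hball : X j (k+1) ∈ closedBall (X j k) r := by
      rw [mem_closedBall, hXsucc]; exact hgd
    have hffact : f (X j (k+1)) = H ((j:ℝ)/N) (((k+1:ℕ):ℝ)/N) := by
      rw [hXsucc]; exact hgf
    have h1 := hanti (X j k) hXK (X j (k+1)) hball (X j k) (mem_closedBall_self hrpos.le)
    calc ‖X j (k+1) - X j k‖ ≤ 2*A*‖f (X j (k+1)) - f (X j k)‖ := h1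
      _ ≤ 2*A*(L/N) := by
          rw [hffact, ihf]
          exact mul_le_mul_of_nonneg_left (hHstep _ hsIcc k hk1) (by positivity)
  have adj : ∀ j, j + 1 ≤ N → ∀ k, k ≤ N → ‖X j k - X (j+1) k‖ ≤ 2 * A * (L / N) := by
    intro j hj1
    have hj : j ≤ N := le_trans (Nat.le_succ j) hj1
    intro k
    induction k with
    | zero =>
      intro _
      rw [hX0, hX0, sub_self, norm_zero]
      positivity
    | succ k ih =>
      intro hk1
      have hk : k ≤ N := le_trans (Nat.le_succ k) hk1
      have ihd := ih hk
      have hXK : X j k ∈ closedBall a R := hXmem j hj k hk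
      have hs1 : dist (X j (k+1)) (X j k) ≤ 2*A*(L/N) := by
        rw [dist_eq_norm]; exact hXstep j hj k hk1
      have hs2 : dist (X (j+1) (k+1)) (X (j+1) k) ≤ 2*A*(L/N) := by
        rw [dist_eq_norm]; exact hXstep (j+1) hj1 k hk1
      have hu : X j (k+1) ∈ closedBall (X j k) r :=
        mem_closedBall.mpr (hs1.trans (le_trans h2ALN (half_le_self hrpos.le)))
      have hv : X (j+1) (k+1) ∈ closedBall (X j k) r := by
        rw [mem_closedBall]
        have htri := dist_triangle (X (j+1) (k+1)) (X (j+1) k) (X j k)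
        have hd2 : dist (X (j+1) k) (X j k) ≤ 2*A*(L/N) := by
          rw [dist_eq_norm, norm_sub_rev]; exact ihd
        linarith [h2ALN]
      have h1 := hanti (X j k) hXK (X j (k+1)) hu (X (j+1) (k+1)) hv
      have hf1 : f (X j (k+1)) = H ((j:ℝ)/N) (((k+1:ℕ):ℝ)/N) := (main j hj (k+1) hk1).1
      have hf2 : f (X (j+1) (k+1)) = H (((j+1:ℕ):ℝ)/N) (((k+1:ℕ):ℝ)/N) :=
        (main (j+1) hj1 (k+1) hk1).1
      have hHdiff : ‖H ((j:ℝ)/N) (((k+1:ℕ):ℝ)/N) - H (((j+1:ℕ):ℝ)/N) (((k+1:ℕ):ℝ)/N)‖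
          ≤ L / N := by
        have h2 := hHslip ((j:ℝ)/N) (hmemdiv j hj) (((j+1:ℕ):ℝ)/N) (hmemdiv (j+1) hj1)
          (((k+1:ℕ):ℝ)/N) (hmemdiv (k+1) hk1)
        have habs : |(j:ℝ)/N - ((j+1:ℕ):ℝ)/N| = 1/N := by
          push_cast
          rw [show (j:ℝ)/N - ((j:ℝ)+1)/N = -(1/N) by ring, abs_neg,
            abs_of_nonneg (by positivity)]
        rw [habs] at h2
        calc ‖H ((j:ℝ)/N) (((k+1:ℕ):ℝ)/N) - H (((j+1:ℕ):ℝ)/N) (((k+1:ℕ):ℝ)/N)‖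
            ≤ L * (1/N) := h2
          _ = L / N := by ring
      calc ‖X j (k+1) - X (j+1) (k+1)‖ ≤ 2*A*‖f (X j (k+1)) - f (X (j+1) (k+1))‖ := h1
        _ ≤ 2*A*(L/N) := by
            rw [hf1, hf2]
            exact mul_le_mul_of_nonneg_left hHdiff (by positivity)
  have htop : ∀ j, j + 1 ≤ N → X j N = X (j+1) N := by
    intro j hj1
    have hj : j ≤ N := le_trans (Nat.le_succ j) hj1
    have hNN : ((N:ℕ):ℝ)/(N:ℝ) = 1 := div_self hNpos.ne'
    have hf1 : f (X j N) = c := by rw [(main j hj N le_rfl).1, hNN, hHt1]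
    have hf2 : f (X (j+1) N) = c := by rw [(main (j+1) hj1 N le_rfl).1, hNN, hHt1]
    have hd := adj j hj1 N le_rfl
    have hu : X j N ∈ closedBall (X j N) r := mem_closedBall_self hrpos.le
    have hv : X (j+1) N ∈ closedBall (X j N) r := by
      rw [mem_closedBall, dist_eq_norm, norm_sub_rev]
      exact le_trans hd (le_trans h2ALN (half_le_self hrpos.le))
    have h1 := hanti (X j N) (hXmem j hj N le_rfl) (X j N) hu (X (j+1) N) hv
    rw [hf1, hf2, sub_self, norm_zero, mul_zero] at h1
    exact sub_eq_zero.mp (norm_le_zero_iff.mp h1)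
  have hchain : ∀ j, j ≤ N → X 0 N = X j N := by
    intro j
    induction j with
    | zero => intro _; rfl
    | succ j ih =>
      intro hj1
      rw [ih (le_trans (Nat.le_succ j) hj1)]
      exact htop j hj1
  have hbot : ∀ k, k ≤ N → X 0 k = σ ((k:ℝ)/N) := by
    intro k
    induction k with
    | zero =>
      intro _
      rw [hX0, Nat.cast_zero, zero_div, hσ0]
    | succ k ih =>
      intro hk1
      have hk : k ≤ N := le_trans (Nat.le_succ k) hk1
      have ihk := ih hk
      have h00 : ((0:ℕ):ℝ)/(N:ℝ) = 0 := by norm_num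
      have hXK : X 0 k ∈ closedBall a R := hXmem 0 (Nat.zero_le N) k hk
      have hfX : f (X 0 k) = φ ((k:ℝ)/N) := by
        rw [(main 0 (Nat.zero_le N) k hk).1, h00, hHs0]
      have hdH : dist (H (((0:ℕ):ℝ)/N) (((k+1:ℕ):ℝ)/N)) (f (X 0 k)) ≤ δ := by
        rw [h00, hHs0, hfX, dist_eq_norm]
        have h2 := hφlip _ (hmemdiv (k+1) hk1) _ (hmemdiv k hk)
        have habs : |((k+1:ℕ):ℝ)/N - (k:ℝ)/N| = 1/N := by
          push_cast
          rw [show ((k:ℝ)+1)/N - (k:ℝ)/N = 1/N by ring, abs_of_nonneg (by positivity)]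
        rw [habs] at h2
        calc ‖φ (((k+1:ℕ):ℝ)/N) - φ ((k:ℝ)/N)‖ ≤ L * (1/N) := h2
          _ = L / N := by ring
          _ ≤ δ := hNLδ
      obtain ⟨hgd, hgf⟩ := hgi (X 0 k) (H (((0:ℕ):ℝ)/N) (((k+1:ℕ):ℝ)/N)) hXK hdH
      have hgiball : X 0 (k+1) ∈ closedBall (X 0 k) r := by
        rw [mem_closedBall, hXsucc]; exact hgd
      have hfgi : f (X 0 (k+1)) = φ (((k+1:ℕ):ℝ)/N) := by
        rw [hXsucc, hgf, h00, hHs0]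
      have hσstep : σ (((k+1:ℕ):ℝ)/N) ∈ closedBall (X 0 k) r := by
        rw [ihk, mem_closedBall, dist_eq_norm]
        have heq : σ (((k+1:ℕ):ℝ)/N) - σ ((k:ℝ)/N) = ((1:ℝ)/N) • (b - a) := by
          rw [hσdef]
          simp only
          push_cast
          module
        rw [heq, norm_smul, Real.norm_eq_abs, abs_of_nonneg (by positivity)]
        calc (1/(N:ℝ)) * ‖b - a‖ = ‖b - a‖ / N := by ring
          _ ≤ r := hNb
      have h1 := hanti (X 0 k) hXK (X 0 (k+1)) hgiball (σ (((k+1:ℕ):ℝ)/N)) hσstep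
      rw [hfgi, hφσ, sub_self, norm_zero, mul_zero] at h1
      exact sub_eq_zero.mp (norm_le_zero_iff.mp h1)
  have htoprow : ∀ k, k ≤ N → X N k = a := by
    intro k
    induction k with
    | zero => intro _; exact hX0 N
    | succ k ih =>
      intro hk1
      have hk : k ≤ N := le_trans (Nat.le_succ k) hk1
      have ihk := ih hk
      have hNN : ((N:ℕ):ℝ)/(N:ℝ) = 1 := div_self hNpos.ne'
      have hXK : X N k ∈ closedBall a R := hXmem N le_rfl k hk
      have hdH : dist (H (((N:ℕ):ℝ)/N) (((k+1:ℕ):ℝ)/N)) (f (X N k)) ≤ δ := by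
        rw [hNN, hHs1, ihk, ← hcdef, dist_self]
        exact hδpos.le
      obtain ⟨hgd, hgf⟩ := hgi (X N k) (H (((N:ℕ):ℝ)/N) (((k+1:ℕ):ℝ)/N)) hXK hdH
      have hgiball : X N (k+1) ∈ closedBall (X N k) r := by
        rw [mem_closedBall, hXsucc]; exact hgd
      have hfgi : f (X N (k+1)) = c := by
        rw [hXsucc, hgf, hNN, hHs1]
      have haball : a ∈ closedBall (X N k) r := by
        rw [ihk]; exact mem_closedBall_self hrpos.le
      have h1 := hanti (X N k) hXK (X N (k+1)) hgiball a haball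
      rw [hfgi, ← hcdef, sub_self, norm_zero, mul_zero] at h1
      exact sub_eq_zero.mp (norm_le_zero_iff.mp h1)
  have hb : b = X 0 N := by
    have h1 := hbot N le_rfl
    rw [div_self hNpos.ne', hσ1] at h1
    exact h1.symm
  calc a = X N N := (htoprow N le_rfl).symm
    _ = X 0 N := (hchain N le_rfl).symm
    _ = b := hb.symm

theorem stmt17 (n : ℕ) (f : EuclideanSpace ℝ (Fin n) → EuclideanSpace ℝ (Fin n))
    (hf : ContDiff ℝ 1 f) (A : ℝ)
    (hinv : ∀ x : EuclideanSpace ℝ (Fin n),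
      ∃ g : EuclideanSpace ℝ (Fin n) ≃L[ℝ] EuclideanSpace ℝ (Fin n),
        (g : EuclideanSpace ℝ (Fin n) →L[ℝ] EuclideanSpace ℝ (Fin n)) = fderiv ℝ f x ∧
          ‖(g.symm : EuclideanSpace ℝ (Fin n) →L[ℝ] EuclideanSpace ℝ (Fin n))‖ ≤ A) :
    Function.Injective f := by
  exact hadamard_aux f hf A hinv
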